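/- Let a_0 < a_1 < ⋯ < a_n be real numbers, let c_{a_0}, …, c_{a_n} > 0, l > 0, and weights ω_{a_0}, …, ω_{a_n} > 0, and let 𝒯_{a_i} be the rational GT-Bernstein basis functions. Then for every strictly increasing sequence a_0 < t_0 < t_1 < ⋯ < t_n < a_n, the collocation matrix C = [𝒯_{a_j}(t_i)]_{i,j=0}^{n} is strictly totally positive: every minor of C is strictly positive. -/

import Mathlib

open Finset Filter Set


/-- A real matrix is strictly totally positive if every minor (determinant of the
submatrix obtained by selecting rows `r 0 < r 1 < ⋯` and columns `c 0 < c 1 < ⋯`)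
is strictly positive. -/
def IsStrictlyTotallyPositive {N M : ℕ} (A : Matrix (Fin N) (Fin M) ℝ) : Prop :=
  ∀ (k : ℕ) (r : Fin k → Fin N) (c : Fin k → Fin M),
    StrictMono r → StrictMono c → 0 < (A.submatrix r c).det

/-- The GT-Bernstein basis functions
`β_{a_i}(t) = c_{a_i} (l(t − a_0))^{l(a_i − a_0)} (l(a_n − t))^{l(a_n − a_i)}`,
where powers are real powers (`Real.rpow`, which satisfies `0 ^ 0 = 1`). -/
noncomputable def gtBernstein (n : ℕ) (a c : Fin (n + 1) → ℝ) (l : ℝ)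
    (i : Fin (n + 1)) (t : ℝ) : ℝ :=
  c i * (l * (t - a 0)) ^ (l * (a i - a 0)) *
    (l * (a (Fin.last n) - t)) ^ (l * (a (Fin.last n) - a i))

/-- The rational GT-Bernstein basis functions
`𝒯_{a_i}(t) = ω_{a_i} β_{a_i}(t) / Σ_j ω_{a_j} β_{a_j}(t)`. -/
noncomputable def ratGTBernstein (n : ℕ) (a c : Fin (n + 1) → ℝ) (l : ℝ)
    (ω : Fin (n + 1) → ℝ) (i : Fin (n + 1)) (t : ℝ) : ℝ :=
  ω i * gtBernstein n a c l i t / ∑ j, ω j * gtBernstein n a c l j t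

/-- For strictly increasing nodes `a 0 < a 1 < ⋯ < a n`, coefficients
`c i > 0`, `l > 0`, weights `ω i > 0`, and any strictly increasing sequence
`a 0 < t 0 < t 1 < ⋯ < t n < a n`, the collocation matrix `C = [𝒯_{a_j}(t_i)]` of
the rational GT-Bernstein basis is strictly totally positive. -/
lemma strictMono_snoc'' {N : ℕ} {w : Fin N → ℝ} {s : ℝ} (hw : StrictMono w)
    (h : ∀ i, w i < s) : StrictMono (Fin.snoc w s) := by
  intro i j hij
  rcases Fin.eq_castSucc_or_eq_last j with ⟨j0, rfl⟩ | rfl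
  · rcases Fin.eq_castSucc_or_eq_last i with ⟨i0, rfl⟩ | rfl
    · simpa using hw (Fin.castSucc_lt_castSucc_iff.mp hij)
    · exact absurd hij (j0.castSucc_lt_last.asymm)
  · rcases Fin.eq_castSucc_or_eq_last i with ⟨i0, rfl⟩ | rfl
    · simpa using h i0
    · exact absurd hij (lt_irrefl _)

lemma exp_poly_zeros : ∀ (m : ℕ) (e : Fin m → ℝ), StrictMono e → ∀ c : Fin m → ℝ, c ≠ 0 →
    ∀ x : Fin m → ℝ, StrictMono x → (∀ i, 0 < x i) →
    ¬ (∀ i, ∑ j, c j * x i ^ e j = 0) := by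
  intro m
  induction m with
  | zero => intro e _ c hc _ _ _ _; exact hc (Subsingleton.elim c 0)
  | succ m ih =>
    intro e he c hc x hx hxpos hzero
    by_cases hcs : ∀ j : Fin m, c j.succ = 0
    · have h0 := hzero 0
      rw [Fin.sum_univ_succ] at h0
      have hz : ∀ j ∈ Finset.univ, c (Fin.succ j) * x 0 ^ e (Fin.succ j) = 0 := by
        intro j _; rw [hcs j]; ring
      rw [Finset.sum_congr rfl hz, Finset.sum_const_zero, add_zero] at h0
      have hc0 : c 0 = 0 := by
        have := Real.rpow_pos_of_pos (hxpos 0) (e 0)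
        rcases mul_eq_zero.mp h0 with h | h
        · exact h
        · exact absurd h this.ne'
      apply hc
      funext j
      rcases Fin.eq_zero_or_eq_succ j with rfl | ⟨j0, rfl⟩
      · exact hc0
      · exact hcs j0
    · push_neg at hcs
      set g : ℝ → ℝ := fun y => ∑ j, c j * y ^ (e j - e 0) with hg
      set D : ℝ → ℝ :=
        fun y => ∑ j : Fin m, (c j.succ * (e j.succ - e 0)) * y ^ (e j.succ - e 0 - 1) with hD
      have hderiv : ∀ y : ℝ, 0 < y → HasDerivAt g (D y) y := by
        intro y hy
        have h1 : HasDerivAt g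
            (∑ j : Fin (m+1), c j * ((e j - e 0) * y ^ (e j - e 0 - 1))) y := by
          apply HasDerivAt.fun_sum
          intro j _
          exact (Real.hasDerivAt_rpow_const (Or.inl hy.ne')).const_mul (c j)
        have h2 : D y = ∑ j : Fin (m+1), c j * ((e j - e 0) * y ^ (e j - e 0 - 1)) := by
          rw [Fin.sum_univ_succ]
          simp only [sub_self, zero_mul, mul_zero, zero_add]
          exact Finset.sum_congr rfl fun j _ => by ring
        exact h2 ▸ h1
      have hgz : ∀ i, g (x i) = 0 := by
        intro i
        have : g (x i) = (∑ j, c j * x i ^ e j) * (x i ^ e 0)⁻¹ := by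
          rw [Finset.sum_mul]
          refine Finset.sum_congr rfl fun j _ => ?_
          rw [Real.rpow_sub (hxpos i), div_eq_mul_inv]
          ring
        rw [this, hzero i, zero_mul]
      have hroll : ∀ i : Fin m, ∃ y ∈ Set.Ioo (x i.castSucc) (x i.succ), D y = 0 := by
        intro i
        have hab : x i.castSucc < x i.succ := hx Fin.castSucc_lt_succ
        have hcont : ContinuousOn g (Set.Icc (x i.castSucc) (x i.succ)) := by
          intro y hy
          have hy0 : 0 < y := lt_of_lt_of_le (hxpos i.castSucc) hy.1
          exact (hderiv y hy0).continuousAt.continuousWithinAt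
        have heq : g (x i.castSucc) = g (x i.succ) := by rw [hgz, hgz]
        exact exists_hasDerivAt_eq_zero hab hcont heq fun y hy =>
          hderiv y (lt_trans (hxpos i.castSucc) hy.1)
      choose y hy hDy using hroll
      refine ih (fun j => e j.succ - e 0 - 1) ?_ (fun j => c j.succ * (e j.succ - e 0)) ?_
        y ?_ ?_ hDy
      · intro i j hij
        have := he (Fin.succ_lt_succ_iff.mpr hij)
        simpa using by linarith
      · obtain ⟨j0, hj0⟩ := hcs
        intro h0
        apply hj0
        have := congrFun h0 j0
        simp only [Pi.zero_apply] at this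
        rcases mul_eq_zero.mp this with h | h
        · exact h
        · exact absurd (sub_eq_zero.mp h) (he (Fin.succ_pos j0)).ne'
      · intro i j hij
        calc y i < x i.succ := (hy i).2
          _ ≤ x j.castSucc := hx.monotone (by
            simp only [Fin.le_def, Fin.val_succ, Fin.coe_castSucc]
            exact hij)
          _ < y j := (hy j).1
      · exact fun i => lt_trans (hxpos i.castSucc) (hy i).1

lemma gvand_det_ne_zero (k : ℕ) (x e : Fin k → ℝ) (hx : StrictMono x) (hxp : ∀ i, 0 < x i)
    (he : StrictMono e) : Matrix.det (Matrix.of fun i j => x i ^ e j) ≠ 0 := by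
  intro hdet
  obtain ⟨v, hv, hMv⟩ := Matrix.exists_mulVec_eq_zero_iff.mpr hdet
  refine exp_poly_zeros k e he v hv x hx hxp fun i => ?_
  have := congrFun hMv i
  simpa [Matrix.mulVec, dotProduct, mul_comm] using this

lemma gvand_det_pos : ∀ (k : ℕ) (x e : Fin k → ℝ), StrictMono x → (∀ i, 0 < x i) →
    StrictMono e → 0 < Matrix.det (Matrix.of fun i j => x i ^ e j) := by
  intro k
  induction k with
  | zero => intro x e _ _ _; simp [Matrix.det_fin_zero]
  | succ N ih =>
    intro x e hx hxp he
    set w : Fin N → ℝ := fun i => x i.castSucc with hwdef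
    have hw : StrictMono w := fun i j hij => hx (Fin.castSucc_lt_castSucc_iff.mpr hij)
    set b : ℝ := x (Fin.last N) with hb
    have hbpos : 0 < b := hxp _
    have hwb : ∀ i, w i < b := fun i => hx (Fin.castSucc_lt_last i)
    set h : ℝ → ℝ := fun s => Matrix.det (Matrix.of fun i j => ((Fin.snoc w s : Fin (N+1) → ℝ) i) ^ e j)
      with hh
    have hxb : (Fin.snoc w b : Fin (N+1) → ℝ) = x := by
      funext i
      rcases Fin.eq_castSucc_or_eq_last i with ⟨i0, rfl⟩ | rfl
      · simp [hwdef]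
      · simp [hb]
    set d : Fin (N+1) → ℝ := fun j => (-1 : ℝ)^((Fin.last N : ℕ) + (j : ℕ)) *
      Matrix.det (Matrix.of fun i' j' : Fin N => w i' ^ e (j.succAbove j')) with hd
    have hform : ∀ s : ℝ, h s = ∑ j, d j * s ^ e j := by
      intro s
      simp only [hh]
      rw [Matrix.det_succ_row _ (Fin.last N)]
      refine Finset.sum_congr rfl fun j _ => ?_
      have h1 : (Matrix.of fun i j => ((Fin.snoc w s : Fin (N+1) → ℝ) i) ^ e j) (Fin.last N) j = s ^ e j := by
        simp
      have h2 : ((Matrix.of fun i j => ((Fin.snoc w s : Fin (N+1) → ℝ) i) ^ e j).submatrix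
          (Fin.last N).succAbove j.succAbove)
          = Matrix.of fun i' j' : Fin N => w i' ^ e (j.succAbove j') := by
        ext i' j'
        simp [Fin.succAbove_last]
      rw [h1, h2, hd]
      ring
    have hdlast : 0 < d (Fin.last N) := by
      simp only [hd]
      have h1 : ((-1 : ℝ))^((Fin.last N : ℕ) + ((Fin.last N : Fin (N+1)) : ℕ)) = 1 := by
        simp [Even.neg_one_pow ⟨N, rfl⟩]
      rw [h1, one_mul]
      have h2 : (Matrix.of fun i' j' : Fin N => w i' ^ e ((Fin.last N).succAbove j'))
          = Matrix.of fun i' j' : Fin N => w i' ^ (e ∘ Fin.castSucc) j' := by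
        ext i' j'; simp [Fin.succAbove_last]
      rw [h2]
      exact ih w (e ∘ Fin.castSucc) hw (fun i => hxp _)
        (fun i j hij => he (Fin.castSucc_lt_castSucc_iff.mpr hij))
    have hne : ∀ s, b ≤ s → h s ≠ 0 := by
      intro s hs
      apply gvand_det_ne_zero (N+1) (Fin.snoc w s) e
      · exact strictMono_snoc'' hw fun i => lt_of_lt_of_le (hwb i) hs
      · intro i
        rcases Fin.eq_castSucc_or_eq_last i with ⟨i0, rfl⟩ | rfl
        · simpa using hxp i0.castSucc
        · simpa using lt_of_lt_of_le hbpos hs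
      · exact he
    have hcont : ContinuousOn h (Set.Ici b) := by
      have : ContinuousOn (fun s : ℝ => ∑ j, d j * s ^ e j) (Set.Ici b) := by
        apply continuousOn_finset_sum
        intro j _
        apply ContinuousOn.mul continuousOn_const
        intro s hs
        have hs0 : s ≠ 0 := (lt_of_lt_of_le hbpos hs).ne'
        exact (Real.continuousAt_rpow_const s (e j) (Or.inl hs0)).continuousWithinAt
      exact this.congr fun s _ => hform s
    have hT : Tendsto (fun s : ℝ => ∑ j, d j * s ^ (e j - e (Fin.last N))) atTop
        (nhds (d (Fin.last N))) := by
      have : Tendsto (fun s : ℝ => ∑ j, d j * s ^ (e j - e (Fin.last N))) atTop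
          (nhds (∑ j, if j = Fin.last N then d j else 0)) := by
        apply tendsto_finset_sum
        intro j _
        by_cases hj : j = Fin.last N
        · subst hj
          simp only [if_pos rfl, sub_self]
          have heq : (fun _ : ℝ => d (Fin.last N)) =ᶠ[atTop]
              fun s : ℝ => d (Fin.last N) * s ^ (0:ℝ) := by
            filter_upwards with s; rw [Real.rpow_zero, mul_one]
          exact Tendsto.congr' heq tendsto_const_nhds
        · simp only [if_neg hj]
          have hje : e j < e (Fin.last N) := he (lt_of_le_of_ne (Fin.le_last j) hj)
          have h0 : Tendsto (fun s : ℝ => s ^ (e j - e (Fin.last N))) atTop (nhds 0) := by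
            have := tendsto_rpow_neg_atTop (y := e (Fin.last N) - e j) (by linarith)
            convert this using 2
            ring
          have := h0.const_mul (d j)
          simpa using this
      convert this using 2
      rw [Finset.sum_ite_eq' Finset.univ (Fin.last N) d]
      simp
    have hev : ∀ᶠ s : ℝ in atTop, 0 < ∑ j, d j * s ^ (e j - e (Fin.last N)) :=
      hT.eventually (eventually_gt_nhds hdlast)
    obtain ⟨s0, hs0sum, hs0b⟩ := (hev.and (eventually_gt_atTop b)).exists
    have hs0pos : 0 < s0 := lt_trans hbpos hs0b
    have hhs0 : 0 < h s0 := by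
      rw [hform]
      have : ∑ j, d j * s0 ^ e j
          = s0 ^ e (Fin.last N) * ∑ j, d j * s0 ^ (e j - e (Fin.last N)) := by
        rw [Finset.mul_sum]
        refine Finset.sum_congr rfl fun j _ => ?_
        rw [Real.rpow_sub hs0pos]
        field_simp
      rw [this]
      exact mul_pos (Real.rpow_pos_of_pos hs0pos _) hs0sum
    have hhb : 0 < h b := by
      by_contra hle
      push_neg at hle
      have hblt : h b < 0 := lt_of_le_of_ne hle (hne b le_rfl)
      obtain ⟨z, hz, hz0⟩ := intermediate_value_Icc hs0b.le
        (hcont.mono (Set.Icc_subset_Ici_self)) ⟨hblt.le, hhs0.le⟩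
      exact hne z hz.1 hz0
    have : h b = Matrix.det (Matrix.of fun i j => x i ^ e j) := by
      rw [hh]; simp only [hxb]
    linarith [this ▸ hhb]

lemma det_row_col_scale {k : ℕ} (P Q : Fin k → ℝ) (V : Matrix (Fin k) (Fin k) ℝ) :
    Matrix.det (Matrix.of fun i j => P i * (Q j * V i j))
      = (∏ i, P i) * ((∏ j, Q j) * V.det) := by
  have h1 := Matrix.det_mul_column P (Matrix.of fun i j => Q j * V i j)
  have h2 := Matrix.det_mul_row Q V
  rw [h2] at h1
  exact h1

theorem ratGTBernstein_collocation_STP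
    (n : ℕ) (a c : Fin (n + 1) → ℝ) (l : ℝ) (ω : Fin (n + 1) → ℝ)
    (ha : StrictMono a) (hc : ∀ i, 0 < c i) (hl : 0 < l) (hω : ∀ i, 0 < ω i)
    (t : Fin (n + 1) → ℝ) (ht : StrictMono t)
    (ht0 : a 0 < t 0) (htn : t (Fin.last n) < a (Fin.last n)) :
    IsStrictlyTotallyPositive
      (Matrix.of fun i j : Fin (n + 1) => ratGTBernstein n a c l ω j (t i)) := by
  intro k r s hr hs
  have htmem : ∀ i, a 0 < t i ∧ t i < a (Fin.last n) := fun i =>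
    ⟨lt_of_lt_of_le ht0 (ht.monotone (Fin.zero_le i)),
     lt_of_le_of_lt (ht.monotone (Fin.le_last i)) htn⟩
  have hupos : ∀ i, (0:ℝ) < l * (t i - a 0) := fun i =>
    mul_pos hl (sub_pos.mpr (htmem i).1)
  have hvpos : ∀ i, (0:ℝ) < l * (a (Fin.last n) - t i) := fun i =>
    mul_pos hl (sub_pos.mpr (htmem i).2)
  have hβpos : ∀ j i, 0 < gtBernstein n a c l j (t i) := fun j i =>
    mul_pos (mul_pos (hc j) (Real.rpow_pos_of_pos (hupos i) _))
      (Real.rpow_pos_of_pos (hvpos i) _)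
  have hSpos : ∀ i, 0 < ∑ j', ω j' * gtBernstein n a c l j' (t i) := fun i =>
    Finset.sum_pos (fun j' _ => mul_pos (hω j') (hβpos j' i)) Finset.univ_nonempty
  set Xf : Fin k → ℝ :=
    fun i => (l * (t (r i) - a 0)) / (l * (a (Fin.last n) - t (r i))) with hXf
  set Ef : Fin k → ℝ := fun j => l * (a (s j) - a 0) with hEf
  set Pf : Fin k → ℝ := fun i =>
    (l * (a (Fin.last n) - t (r i))) ^ (l * (a (Fin.last n) - a 0)) /
      ∑ j', ω j' * gtBernstein n a c l j' (t (r i)) with hPf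
  set Qf : Fin k → ℝ := fun j => ω (s j) * c (s j) with hQf
  set Vf : Matrix (Fin k) (Fin k) ℝ := Matrix.of fun i j => Xf i ^ Ef j with hVf
  have hentry : ((Matrix.of fun i j : Fin (n + 1) =>
      ratGTBernstein n a c l ω j (t i)).submatrix r s)
      = Matrix.of fun i j => Pf i * (Qf j * Vf i j) := by
    ext i j
    simp only [Matrix.submatrix_apply, Matrix.of_apply, hPf, hQf, hVf, hXf, hEf,
      ratGTBernstein]
    set SS := ∑ j', ω j' * gtBernstein n a c l j' (t (r i)) with hSS
    have hSSpos : 0 < SS := hSpos (r i)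
    rw [gtBernstein]
    have hu := hupos (r i)
    have hv := hvpos (r i)
    have hexp : l * (a (Fin.last n) - a (s j))
        = l * (a (Fin.last n) - a 0) - l * (a (s j) - a 0) := by ring
    rw [hexp, Real.rpow_sub hv, Real.div_rpow hu.le hv.le]
    have hvE : (0:ℝ) < (l * (a (Fin.last n) - t (r i))) ^ (l * (a (s j) - a 0)) :=
      Real.rpow_pos_of_pos hv _
    field_simp
  rw [hentry, det_row_col_scale]
  have hXmono : StrictMono Xf := by
    intro i i' hii
    have h12 : t (r i) < t (r i') := ht (hr hii)
    have h1 := (htmem (r i)).1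
    have h2 := (htmem (r i')).2
    simp only [hXf]
    rw [div_lt_div_iff₀ (hvpos (r i)) (hvpos (r i'))]
    nlinarith [mul_pos (mul_pos hl hl)
      (mul_pos (sub_pos.mpr h12) (sub_pos.mpr (h1.trans (h12.trans h2))))]
  have hXpos : ∀ i, 0 < Xf i := fun i => div_pos (hupos (r i)) (hvpos (r i))
  have hEmono : StrictMono Ef := by
    intro i j hij
    have := ha (hs hij)
    simp only [hEf]
    nlinarith
  have hVpos : 0 < Vf.det := by
    rw [hVf]
    exact gvand_det_pos k Xf Ef hXmono hXpos hEmono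
  refine mul_pos (Finset.prod_pos fun i _ => ?_)
    (mul_pos (Finset.prod_pos fun j _ => ?_) hVpos)
  · exact div_pos (Real.rpow_pos_of_pos (hvpos (r i)) _) (hSpos (r i))
  · exact mul_pos (hω (s j)) (hc (s j))
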